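/- For each N ∈ ℕ, the 1-Wasserstein distance between the piecewise-constant discrete density ρ^N(t,·) and the empirical measure ρ̂^N(t) = (1/N) Σ_{i=0}^N δ_{x_i(t)} satisfies d_{W¹}(ρ^N(t,·), ρ̂^N(t)) ≤ C/N for all t ≥ 0, where C depends only on the diameter of the support of ρ̄ (in fact C = (1/2)·meas(supp ρ̄) suffices given the uniform support bound). -/

import Mathlib

open Set Finset MeasureTheory

/-- The pseudo-inverse of the cumulative distribution function of the discrete
density `ρ^N(t,·)`. -/
noncomputable def pseudoInv (N : ℕ) (x : ℕ → ℝ → ℝ) (t z : ℝ) : ℝ :=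
  ∑ i ∈ Finset.range N,
    Set.indicator (Set.Ico ((i : ℝ) / (N : ℝ)) (((i : ℝ) + 1) / (N : ℝ)))
      (fun w => x i t + (w - (i : ℝ) / (N : ℝ)) * ((N : ℝ) * (x (i+1) t - x i t))) z

/-- The pseudo-inverse of the cumulative distribution function of the
empirical measure `ρ̂^N(t) = (1/N) Σ_i δ_{x_i(t)}`. -/
noncomputable def pseudoInvEmp (N : ℕ) (x : ℕ → ℝ → ℝ) (t z : ℝ) : ℝ :=
  ∑ i ∈ Finset.range N,
    Set.indicator (Set.Ico ((i : ℝ) / (N : ℝ)) (((i : ℝ) + 1) / (N : ℝ)))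
      (fun _ => x i t) z

lemma pseudo_key (N : ℕ) (hN : 1 ≤ N) (x : ℕ → ℝ → ℝ) (t z : ℝ) (i : ℕ) (hi : i < N)
    (hz : z ∈ Set.Ico ((i:ℝ)/(N:ℝ)) (((i:ℝ)+1)/(N:ℝ))) :
    pseudoInv N x t z - pseudoInvEmp N x t z
      = (z - (i:ℝ)/(N:ℝ)) * ((N:ℝ) * (x (i+1) t - x i t)) := by
  have hNpos : (0:ℝ) < (N:ℝ) := by exact_mod_cast hN
  have hdisj : ∀ j ∈ Finset.range N, j ≠ i →
      z ∉ Set.Ico ((j:ℝ)/(N:ℝ)) (((j:ℝ)+1)/(N:ℝ)) := by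
    intro j _ hj hmem
    rcases lt_or_gt_of_ne hj with h | h
    · have h1 : ((j:ℝ)+1)/(N:ℝ) ≤ (i:ℝ)/(N:ℝ) := by
        apply div_le_div_of_nonneg_right ?_ hNpos.le
        · exact_mod_cast h
      exact absurd (lt_of_lt_of_le hmem.2 (h1.trans hz.1)) (lt_irrefl z)
    · have h1 : ((i:ℝ)+1)/(N:ℝ) ≤ (j:ℝ)/(N:ℝ) := by
        apply div_le_div_of_nonneg_right ?_ hNpos.le
        · exact_mod_cast h
      exact absurd (lt_of_lt_of_le hz.2 (h1.trans hmem.1)) (lt_irrefl z)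
  unfold pseudoInv pseudoInvEmp
  rw [Finset.sum_eq_single_of_mem i (Finset.mem_range.mpr hi)
      (fun j hj hji => Set.indicator_of_notMem (hdisj j hj hji) _),
    Finset.sum_eq_single_of_mem i (Finset.mem_range.mpr hi)
      (fun j hj hji => Set.indicator_of_notMem (hdisj j hj hji) _),
    Set.indicator_of_mem hz, Set.indicator_of_mem hz]
  ring

theorem wasserstein_discrete_vs_empirical
    (N : ℕ) (a b : ℝ) (x : ℕ → ℝ → ℝ)
    (hN : 1 ≤ N) (hab : a ≤ b)
    (hord : ∀ t, 0 ≤ t → ∀ i, i < N → x i t < x (i+1) t)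
    (hconf : ∀ t, 0 ≤ t → ∀ i, i ≤ N → x i t ∈ Icc a b) :
    ∀ t, 0 ≤ t →
      (∫ z in (0:ℝ)..1, |pseudoInv N x t z - pseudoInvEmp N x t z|)
        ≤ ((b - a) / 2) / (N : ℝ) := by
  intro t ht
  have hNpos : (0:ℝ) < (N:ℝ) := by exact_mod_cast hN
  set F : ℝ → ℝ := fun z => |pseudoInv N x t z - pseudoInvEmp N x t z| with hF
  set c : ℕ → ℝ := fun i => (i:ℝ)/(N:ℝ) with hc
  -- on each interval, a.e. equality with a continuous function
  have hmono : ∀ i, c i ≤ c (i+1) := by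
    intro i
    apply div_le_div_of_nonneg_right ?_ hNpos.le
    · push_cast; linarith
  have key2 : ∀ i, i < N →
      (fun z => F z) =ᵐ[volume.restrict (Set.Ioc (c i) (c (i+1)))]
        (fun z => (z - c i) * ((N:ℝ) * (x (i+1) t - x i t))) := by
    intro i hi
    rw [← MeasureTheory.Measure.restrict_congr_set MeasureTheory.Ioo_ae_eq_Ioc]
    filter_upwards [MeasureTheory.ae_restrict_mem measurableSet_Ioo] with z hz
    have hz' : z ∈ Set.Ico ((i:ℝ)/(N:ℝ)) (((i:ℝ)+1)/(N:ℝ)) := by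
      refine ⟨le_of_lt hz.1, ?_⟩
      have h := hz.2
      have he : c (i+1) = ((i:ℝ)+1)/(N:ℝ) := by simp only [hc]; push_cast; ring
      rwa [he] at h
    have hd : 0 < x (i+1) t - x i t := sub_pos.mpr (hord t ht i hi)
    have hz0 : 0 ≤ z - (i:ℝ)/(N:ℝ) := sub_nonneg.mpr hz'.1
    rw [hF]
    simp only
    rw [pseudo_key N hN x t z i hi hz', abs_of_nonneg (by positivity)]
  have hcont : ∀ i : ℕ, Continuous (fun z : ℝ => (z - c i) * ((N:ℝ) * (x (i+1) t - x i t))) := by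
    intro i; continuity
  have hint : ∀ i, i < N → IntervalIntegrable F volume (c i) (c (i+1)) := by
    intro i hi
    rw [intervalIntegrable_iff, Set.uIoc_of_le (hmono i)]
    exact (((hcont i).integrableOn_Ioc)).congr (key2 i hi).symm
  have hsplit : ∑ i ∈ Finset.range N, ∫ z in (c i)..(c (i+1)), F z
      = ∫ z in (c 0)..(c N), F z :=
    intervalIntegral.sum_integral_adjacent_intervals (fun k hk => hint k hk)
  have hc0 : c 0 = 0 := by simp [hc]
  have hcN : c N = 1 := by simp only [hc]; exact div_self hNpos.ne'
  have hval : ∀ i, i < N →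
      ∫ z in (c i)..(c (i+1)), F z = (x (i+1) t - x i t) / (2 * (N:ℝ)) := by
    intro i hi
    have h1 : ∫ z in (c i)..(c (i+1)), F z
        = ∫ z in (c i)..(c (i+1)), (z - c i) * ((N:ℝ) * (x (i+1) t - x i t)) := by
      apply intervalIntegral.integral_congr_ae
      have h0 : ∀ᵐ z : ℝ ∂volume, z ∈ Set.uIoc (c i) (c (i+1)) → F z
          = (z - c i) * ((N:ℝ) * (x (i+1) t - x i t)) := by
        rw [Set.uIoc_of_le (hmono i), ← MeasureTheory.ae_restrict_iff' measurableSet_Ioc]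
        exact key2 i hi
      exact h0
    rw [h1]
    have h2 : ∫ z in (c i)..(c (i+1)), (z - c i) * ((N:ℝ) * (x (i+1) t - x i t))
        = (∫ z in (c i)..(c (i+1)), (z - c i)) * ((N:ℝ) * (x (i+1) t - x i t)) :=
      intervalIntegral.integral_mul_const _ _
    rw [h2]
    have h3 : ∫ z in (c i)..(c (i+1)), (z - c i)
        = (c (i+1))^2/2 - (c i)^2/2 - (c i) * (c (i+1) - c i) := by
      rw [intervalIntegral.integral_sub intervalIntegral.intervalIntegrable_id
        intervalIntegrable_const, integral_id, intervalIntegral.integral_const, smul_eq_mul]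
      ring
    rw [h3]
    have hci : c (i+1) - c i = 1/(N:ℝ) := by
      simp only [hc]; push_cast; field_simp; ring
    have : (c (i+1))^2/2 - (c i)^2/2 - (c i) * (c (i+1) - c i) = (1/(N:ℝ))^2/2 := by
      have h4 : c (i+1) = c i + 1/(N:ℝ) := by linarith
      rw [h4]; ring
    rw [this]
    field_simp
  calc (∫ z in (0:ℝ)..1, F z)
      = ∑ i ∈ Finset.range N, ∫ z in (c i)..(c (i+1)), F z := by
        rw [hsplit, hc0, hcN]
    _ = ∑ i ∈ Finset.range N, (x (i+1) t - x i t) / (2 * (N:ℝ)) :=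
        Finset.sum_congr rfl (fun i hi => hval i (Finset.mem_range.mp hi))
    _ = (x N t - x 0 t) / (2 * (N:ℝ)) := by
        rw [← Finset.sum_div, Finset.sum_range_sub (fun i => x i t)]
    _ ≤ (b - a) / (2 * (N:ℝ)) := by
        have h1 := (hconf t ht N le_rfl).2
        have h2 := (hconf t ht 0 (Nat.zero_le N)).1
        apply div_le_div_of_nonneg_right ?_ (by positivity)
        · linarith
    _ = ((b - a) / 2) / (N : ℝ) := by ring
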